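/- For every continuously differentiable function f : ℝ → ℝ, the zero-bias identity ∫_ℝ f′(x) y_N(x) dx = (1/(N−1)) Σ_{n=1}^N x_{N,n} f(x_{N,n}) holds; equivalently, writing σ² = (N−1)/N for the variance of the empirical distribution 𝕡_N = (1/N) Σ_{n=1}^N δ_{x_{N,n}}, one has σ² ∫_ℝ f′(x) y_N(x) dx = (1/N) Σ_{n=1}^N x_{N,n} f(x_{N,n}), so y_N is the density of the 𝕡_N-zero-bias distribution. -/

import Mathlib

open Finset

/-- Partial sum `S_n = x_1 + ... + x_n`. -/
noncomputable def S (x : ℕ → ℝ) (n : ℕ) : ℝ := ∑ i ∈ Finset.Icc 1 n, x i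

/-- `x_1, ..., x_N` is a solution of the recursion `x_{n+1} = x_n - 1/S_n`
with all relevant partial sums nonzero. -/
def IsSolution (N : ℕ) (x : ℕ → ℝ) : Prop :=
  ∀ n, 1 ≤ n → n ≤ N - 1 → S x n ≠ 0 ∧ x (n + 1) = x n - 1 / S x n

/-- Zero-median property: the middle value is `0` when `N` is odd, and the two middle
values are negatives of each other when `N` is even. -/
def ZeroMedian (N : ℕ) (x : ℕ → ℝ) : Prop :=
  (Odd N → x ((N + 1) / 2) = 0) ∧ (Even N → x (N / 2) = - x (N / 2 + 1))

/-- The piecewise-constant density `y_N`: it equals `S_{N,n}/(N-1)`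
(equivalently `1/((N-1)(x_{N,n} - x_{N,n+1}))`) on `[x_{N,n+1}, x_{N,n})` for
`n = 1, ..., N-1`, and `0` outside `[x_{N,N}, x_{N,1})`. -/
noncomputable def yDen (N : ℕ) (x : ℕ → ℝ) (t : ℝ) : ℝ :=
  ∑ n ∈ Finset.Icc 1 (N - 1), if x (n + 1) ≤ t ∧ t < x n then S x n / ((N : ℝ) - 1) else 0

open MeasureTheory

private lemma abel_sum (x b : ℕ → ℝ) (m : ℕ) :
    ∑ n ∈ Finset.Icc 1 m, S x n * (b n - b (n + 1)) =
      (∑ n ∈ Finset.Icc 1 m, x n * b n) - S x m * b (m + 1) := by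
  induction m with
  | zero => simp [S]
  | succ m ih =>
    have hS : S x (m + 1) = S x m + x (m + 1) := by
      rw [S, Finset.sum_Icc_succ_top (by omega)]; rfl
    rw [Finset.sum_Icc_succ_top (by omega), Finset.sum_Icc_succ_top (by omega :
      1 ≤ m + 1), ih, hS]
    ring


/-- The zero-bias identity: for every continuously differentiable `f : ℝ → ℝ`,
`∫ f'(t) y_N(t) dt = (1/(N-1)) ∑_{n=1}^N x_{N,n} f(x_{N,n})`; equivalently, with
`σ² = (N-1)/N` the variance of the empirical distribution `𝕡_N`,
`σ² ∫ f'(t) y_N(t) dt = (1/N) ∑_{n=1}^N x_{N,n} f(x_{N,n})`, i.e. `y_N` is the density of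
the `𝕡_N`-zero-bias distribution. -/
theorem yDen_zero_bias_identity (N : ℕ) (hN : 3 ≤ N) (x : ℕ → ℝ)
    (hsol : IsSolution N x) (hdec : ∀ n, 1 ≤ n → n < N → x (n + 1) < x n)
    (hmean : ∑ i ∈ Finset.Icc 1 N, x i = 0)
    (f : ℝ → ℝ) (hf : ContDiff ℝ 1 f) :
    (∫ t, deriv f t * yDen N x t) =
        (1 / ((N : ℝ) - 1)) * ∑ n ∈ Finset.Icc 1 N, x n * f (x n) ∧
      (((N : ℝ) - 1) / N) * (∫ t, deriv f t * yDen N x t) =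
        (1 / (N : ℝ)) * ∑ n ∈ Finset.Icc 1 N, x n * f (x n) := by
  have hdiff : Differentiable ℝ f := hf.differentiable one_ne_zero
  have hcont : Continuous (deriv f) := hf.continuous_deriv le_rfl
  have hNR : (3 : ℝ) ≤ (N : ℝ) := by exact_mod_cast hN
  have hN1 : ((N : ℝ) - 1) ≠ 0 := by linarith
  have hN0 : (N : ℝ) ≠ 0 := by linarith
  have key : (∫ t, deriv f t * yDen N x t)
      = ∑ n ∈ Finset.Icc 1 (N - 1),
          S x n / ((N : ℝ) - 1) * (f (x n) - f (x (n + 1))) := by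
    have heq : ∀ t, deriv f t * yDen N x t =
        ∑ n ∈ Finset.Icc 1 (N - 1),
          (Set.Ico (x (n + 1)) (x n)).indicator
            (fun s => deriv f s * (S x n / ((N : ℝ) - 1))) t := by
      intro t
      rw [yDen, Finset.mul_sum]
      refine Finset.sum_congr rfl fun n _ => ?_
      rw [Set.indicator_apply]
      by_cases h : x (n + 1) ≤ t ∧ t < x n
      · rw [if_pos h, if_pos (Set.mem_Ico.2 h)]
      · rw [if_neg h, if_neg (fun hm => h (Set.mem_Ico.1 hm)), mul_zero]
    have hint : ∀ n ∈ Finset.Icc 1 (N - 1),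
        Integrable ((Set.Ico (x (n + 1)) (x n)).indicator
          (fun s => deriv f s * (S x n / ((N : ℝ) - 1)))) := by
      intro n _
      exact (((hcont.mul continuous_const).integrableOn_Icc).mono_set
        Set.Ico_subset_Icc_self).integrable_indicator measurableSet_Ico
    simp only [heq]
    rw [MeasureTheory.integral_finset_sum _ hint]
    refine Finset.sum_congr rfl fun n hn => ?_
    have hn' := Finset.mem_Icc.1 hn
    have hle : x (n + 1) ≤ x n := le_of_lt (hdec n hn'.1 (by omega))
    rw [MeasureTheory.integral_indicator measurableSet_Ico,
      ← MeasureTheory.integral_Icc_eq_integral_Ico,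
      MeasureTheory.integral_Icc_eq_integral_Ioc,
      ← intervalIntegral.integral_of_le hle,
      intervalIntegral.integral_mul_const,
      intervalIntegral.integral_deriv_eq_sub (fun y _ => hdiff y)
        (hcont.intervalIntegrable _ _)]
    ring
  have hNn : N - 1 + 1 = N := by omega
  have hSN : S x (N - 1) = - x N := by
    have h := Finset.sum_Icc_succ_top (by omega : 1 ≤ N - 1 + 1) x
    rw [hNn, hmean] at h
    have hS : S x (N - 1) = ∑ i ∈ Finset.Icc 1 (N - 1), x i := rfl
    linarith
  have hfirst : (∫ t, deriv f t * yDen N x t) =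
      (1 / ((N : ℝ) - 1)) * ∑ n ∈ Finset.Icc 1 N, x n * f (x n) := by
    rw [key]
    have : ∀ n ∈ Finset.Icc 1 (N - 1),
        S x n / ((N : ℝ) - 1) * (f (x n) - f (x (n + 1))) =
          (1 / ((N : ℝ) - 1)) * (S x n * (f (x n) - f (x (n + 1)))) := by
      intro n _; ring
    rw [Finset.sum_congr rfl this, ← Finset.mul_sum,
      abel_sum x (fun n => f (x n)) (N - 1), hSN, hNn]
    have hsum : ∑ n ∈ Finset.Icc 1 N, x n * f (x n) =
        (∑ n ∈ Finset.Icc 1 (N - 1), x n * f (x n)) + x N * f (x N) := by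
      have h := Finset.sum_Icc_succ_top (by omega : 1 ≤ N - 1 + 1)
        (fun n => x n * f (x n))
      rw [hNn] at h
      exact h
    rw [hsum]
    ring
  refine ⟨hfirst, ?_⟩
  rw [hfirst]
  field_simp
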